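/- For any family of nonnegative operators {ρ_τ} on a Hilbert space H, any family of orthogonal projectors {P_τ}, and any measure dτ, the trace norm of ∫(ρ_τ − P_τ ρ_τ P_τ) dτ is at most 3 times the trace norm of ∫(id − P_τ) ρ_τ dτ. -/

import Mathlib

open scoped ComplexOrder Matrix

open MeasureTheory

attribute [local instance] Matrix.frobeniusNormedAddCommGroup Matrix.frobeniusNormedSpace

/-- The trace norm (Schatten 1-norm) of a complex square matrix. -/
noncomputable def traceNorm {n : Type*} [Fintype n] [DecidableEq n]
    (A : Matrix n n ℂ) : ℝ :=
  ((Matrix.posSemidef_conjTranspose_mul_self A).1.eigenvectorUnitary.1 *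
    Matrix.diagonal (((↑) : ℝ → ℂ) ∘ (√·) ∘ (Matrix.posSemidef_conjTranspose_mul_self A).1.eigenvalues) *
    (star (Matrix.posSemidef_conjTranspose_mul_self A).1.eigenvectorUnitary : Matrix n n ℂ)).trace.re


set_option linter.unusedSectionVars false
set_option maxHeartbeats 1000000
namespace TNAux
open Matrix
variable {n : Type*} [Fintype n] [DecidableEq n]

variable {n : Type*} [Fintype n] [DecidableEq n]

noncomputable def cnorm (x : n → ℂ) : ℝ := Real.sqrt (star x ⬝ᵥ x).re

lemma dot_eq_inner (x y : n → ℂ) :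
    star x ⬝ᵥ y = (inner ℂ ((WithLp.equiv 2 (n → ℂ)).symm x) ((WithLp.equiv 2 (n → ℂ)).symm y) : ℂ) :=
  (dotProduct_comm _ _).trans (EuclideanSpace.inner_toLp_toLp x y).symm

lemma cnorm_eq_norm (x : n → ℂ) : cnorm x = ‖(WithLp.equiv 2 (n → ℂ)).symm x‖ := by
  rw [cnorm, dot_eq_inner, norm_eq_sqrt_re_inner (𝕜 := ℂ)]; rfl

lemma dot_self_re_nonneg (x : n → ℂ) : 0 ≤ (star x ⬝ᵥ x).re := by
  rw [dot_eq_inner]; exact inner_self_nonneg (𝕜 := ℂ)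

lemma cnorm_sq (x : n → ℂ) : cnorm x ^ 2 = (star x ⬝ᵥ x).re :=
  Real.sq_sqrt (dot_self_re_nonneg x)

lemma cnorm_nonneg (x : n → ℂ) : 0 ≤ cnorm x := Real.sqrt_nonneg _

lemma cs (x y : n → ℂ) : ‖star x ⬝ᵥ y‖ ≤ cnorm x * cnorm y := by
  rw [dot_eq_inner, cnorm_eq_norm, cnorm_eq_norm]
  exact norm_inner_le_norm (𝕜 := ℂ) _ _

lemma re_dot_le (x y : n → ℂ) : (star x ⬝ᵥ y).re ≤ cnorm x * cnorm y :=
  le_trans (Complex.re_le_norm _) (cs x y)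

lemma dot_mulVec_left (A : Matrix n n ℂ) (x y : n → ℂ) :
    star (A *ᵥ x) ⬝ᵥ y = star x ⬝ᵥ (Aᴴ *ᵥ y) := by
  rw [star_mulVec, ← Matrix.dotProduct_mulVec]

lemma diag_conj (V M : Matrix n n ℂ) (j : n) :
    (Vᴴ * M * V) j j = star (fun i => V i j) ⬝ᵥ (M *ᵥ fun i => V i j) := by
  simp only [mul_apply, conjTranspose_apply, dotProduct, mulVec, Pi.star_apply,
    Finset.sum_mul, Finset.mul_sum]
  rw [Finset.sum_comm]
  congr 1; ext k; congr 1; ext l; ring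

lemma trace_eq_sum_col (V M : Matrix n n ℂ) (hV : V * Vᴴ = 1) :
    M.trace = ∑ j, star (fun i => V i j) ⬝ᵥ (M *ᵥ fun i => V i j) := by
  have h1 : (Vᴴ * M * V).trace = M.trace := by
    rw [Matrix.trace_mul_cycle, hV, one_mul]
  rw [← h1]
  simp only [Matrix.trace, Matrix.diag]
  exact Finset.sum_congr rfl fun j _ => diag_conj V M j

/-- contraction predicate -/
def Contr (C : Matrix n n ℂ) : Prop := ∀ x : n → ℂ, cnorm (C *ᵥ x) ≤ cnorm x

lemma Contr.one : Contr (1 : Matrix n n ℂ) := fun x => by rw [one_mulVec]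

lemma Contr.conjTranspose {C : Matrix n n ℂ} (hC : Contr C) : Contr Cᴴ := by
  intro x
  have h1 : cnorm (Cᴴ *ᵥ x) ^ 2 ≤ cnorm x * cnorm (Cᴴ *ᵥ x) := by
    rw [cnorm_sq]
    calc (star (Cᴴ *ᵥ x) ⬝ᵥ (Cᴴ *ᵥ x)).re
        = (star x ⬝ᵥ (C *ᵥ (Cᴴ *ᵥ x))).re := by
          rw [dot_mulVec_left, conjTranspose_conjTranspose]
      _ ≤ cnorm x * cnorm (C *ᵥ (Cᴴ *ᵥ x)) := re_dot_le _ _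
      _ ≤ cnorm x * cnorm (Cᴴ *ᵥ x) :=
          mul_le_mul_of_nonneg_left (hC _) (cnorm_nonneg x)
  nlinarith [cnorm_nonneg (Cᴴ *ᵥ x), cnorm_nonneg x]

noncomputable def sqM (A : Matrix n n ℂ) : Matrix n n ℂ :=
  (Matrix.posSemidef_conjTranspose_mul_self A).1.eigenvectorUnitary.1 *
    Matrix.diagonal (((↑) : ℝ → ℂ) ∘ (√·) ∘ (Matrix.posSemidef_conjTranspose_mul_self A).1.eigenvalues) *
    (star (Matrix.posSemidef_conjTranspose_mul_self A).1.eigenvectorUnitary : Matrix n n ℂ)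

lemma traceNorm_eq (A : Matrix n n ℂ) : traceNorm A = (sqM A).trace.re := rfl

lemma sqM_eq_cfc (A : Matrix n n ℂ) : sqM A = cfc Real.sqrt (Aᴴ * A) := by
  rw [(Matrix.posSemidef_conjTranspose_mul_self A).1.cfc_eq]
  rfl

lemma sqM_psd (A : Matrix n n ℂ) : (sqM A).PosSemidef := by
  have hD : (Matrix.diagonal (((↑) : ℝ → ℂ) ∘ (√·) ∘
      (Matrix.posSemidef_conjTranspose_mul_self A).1.eigenvalues)).PosSemidef :=
    Matrix.posSemidef_diagonal_iff.mpr fun i => Complex.zero_le_real.mpr (Real.sqrt_nonneg _)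
  exact hD.mul_mul_conjTranspose_same _

lemma spec_nonneg {M : Matrix n n ℂ} (hM : M.PosSemidef) : ∀ x ∈ spectrum ℝ M, 0 ≤ x := by
  rw [hM.1.spectrum_real_eq_range_eigenvalues]
  rintro _ ⟨i, rfl⟩
  exact hM.eigenvalues_nonneg i

lemma sqM_mul_self (A : Matrix n n ℂ) : sqM A * sqM A = Aᴴ * A := by
  have hs := spec_nonneg (Matrix.posSemidef_conjTranspose_mul_self A)
  have hsa : IsSelfAdjoint (Aᴴ * A) := (Matrix.posSemidef_conjTranspose_mul_self A).1
  rw [sqM_eq_cfc, ← cfc_mul Real.sqrt Real.sqrt (Aᴴ * A)]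
  calc cfc (fun x => Real.sqrt x * Real.sqrt x) (Aᴴ * A) = cfc (fun x : ℝ => x) (Aᴴ * A) :=
        cfc_congr fun x hx => Real.mul_self_sqrt (hs x hx)
    _ = Aᴴ * A := cfc_id' ℝ (Aᴴ * A)

lemma sqM_of_sq_eq {M : Matrix n n ℂ} (hM : M.PosSemidef) (B : Matrix n n ℂ)
    (hsq : M ^ 2 = Bᴴ * B) : M = sqM B := by
  have hs := spec_nonneg hM
  have hsa : IsSelfAdjoint M := hM.1
  have hMM : Bᴴ * B = cfc (fun x : ℝ => x * x) M := by
    rw [← hsq, cfc_mul (fun x : ℝ => x) (fun x : ℝ => x) M, cfc_id' ℝ M, pow_two]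
  rw [sqM_eq_cfc, hMM, ← cfc_comp' Real.sqrt (fun x : ℝ => x * x) M]
  calc M = cfc (fun x : ℝ => x) M := (cfc_id' ℝ M).symm
    _ = cfc (fun x => Real.sqrt (x * x)) M :=
        cfc_congr fun x hx => (Real.sqrt_mul_self (hs x hx)).symm

section core

variable (A : Matrix n n ℂ)

/-- The dual bound: for a contraction `Cᴴ`, `re tr (C * A) ≤ ‖A‖₁`. -/
lemma re_trace_mul_le (C : Matrix n n ℂ) (hC : Contr Cᴴ) :
    (Matrix.trace (C * A)).re ≤ traceNorm A := by
  set hpsd := Matrix.posSemidef_conjTranspose_mul_self A with hhpsd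
  set P := sqM A with hPdef
  have hP : P.PosSemidef := sqM_psd A
  have hPA : P * P = Aᴴ * A := sqM_mul_self A
  set V : Matrix n n ℂ := (Matrix.IsHermitian.eigenvectorUnitary hP.1 : Matrix n n ℂ) with hVdef
  set s : n → ℝ := hP.1.eigenvalues with hsdef
  have hVV : V * Vᴴ = 1 := Matrix.mem_unitaryGroup_iff.mp (Matrix.IsHermitian.eigenvectorUnitary hP.1).2
  set v : n → n → ℂ := fun j i => V i j with hvdef
  have hvb : ∀ j, v j = ⇑(hP.1.eigenvectorBasis j) := by
    intro j; funext i; exact Matrix.IsHermitian.eigenvectorUnitary_apply hP.1 i j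
  have hEig : ∀ j, P *ᵥ v j = (s j : ℂ) • v j := by
    intro j
    rw [hvb j, hP.1.mulVec_eigenvectorBasis j]
    ext i; simp [Complex.real_smul]; exact Or.inl rfl
  have hnorm : ∀ j, cnorm (v j) = 1 := by
    intro j
    rw [hvb j, cnorm_eq_norm]
    exact hP.1.eigenvectorBasis.orthonormal.1 j
  have hdotv : ∀ j, star (v j) ⬝ᵥ v j = 1 := by
    intro j
    have h := cnorm_sq (v j)
    rw [hnorm j] at h
    have him : (star (v j) ⬝ᵥ v j).im = 0 := by
      rw [dot_eq_inner]
      exact inner_self_im (𝕜 := ℂ) _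
    apply Complex.ext <;> simp [← h, him]
  have hsnn : ∀ j, 0 ≤ s j := fun j => hP.eigenvalues_nonneg j
  have hAv : ∀ j, cnorm (A *ᵥ v j) = s j := by
    intro j
    have h2 : cnorm (A *ᵥ v j) ^ 2 = s j ^ 2 := by
      rw [cnorm_sq, dot_mulVec_left, Matrix.mulVec_mulVec, ← hPA, ← Matrix.mulVec_mulVec,
        hEig j, Matrix.mulVec_smul, hEig j, smul_smul]
      rw [dotProduct_smul, hdotv j]
      simp [pow_two]
    nlinarith [cnorm_nonneg (A *ᵥ v j), hsnn j]
  have htr : traceNorm A = ∑ j, s j := by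
    rw [traceNorm_eq]
    rw [show sqM A = P from rfl]
    rw [trace_eq_sum_col V P hVV]
    rw [Complex.re_sum]
    congr 1; funext j
    rw [show (fun i => V i j) = v j from rfl, hEig j, dotProduct_smul, hdotv j]
    simp
  rw [htr, trace_eq_sum_col V (C * A) hVV, Complex.re_sum]
  apply Finset.sum_le_sum
  intro j _
  have key : star (v j) ⬝ᵥ ((C * A) *ᵥ v j) = star (Cᴴ *ᵥ v j) ⬝ᵥ (A *ᵥ v j) := by
    rw [dot_mulVec_left, conjTranspose_conjTranspose, Matrix.mulVec_mulVec]
  rw [show (fun i => V i j) = v j from rfl, key]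
  calc (star (Cᴴ *ᵥ v j) ⬝ᵥ (A *ᵥ v j)).re
      ≤ cnorm (Cᴴ *ᵥ v j) * cnorm (A *ᵥ v j) := re_dot_le _ _
    _ ≤ 1 * s j := by
        apply mul_le_mul
        · rw [← hnorm j]; exact hC (v j)
        · rw [hAv j]
        · exact cnorm_nonneg _
        · exact zero_le_one
    _ = s j := one_mul _

end core


lemma conj_mul (V : Matrix n n ℂ) (hVV' : Vᴴ * V = 1) (a b : n → ℂ) :
    (V * Matrix.diagonal a * Vᴴ) * (V * Matrix.diagonal b * Vᴴ)
      = V * Matrix.diagonal (fun j => a j * b j) * Vᴴ := by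
  have h : Vᴴ * (V * Matrix.diagonal b * Vᴴ) = Matrix.diagonal b * Vᴴ := by
    rw [← mul_assoc, ← mul_assoc, hVV', one_mul]
  calc (V * Matrix.diagonal a * Vᴴ) * (V * Matrix.diagonal b * Vᴴ)
      = V * Matrix.diagonal a * (Vᴴ * (V * Matrix.diagonal b * Vᴴ)) := by rw [mul_assoc]
    _ = V * Matrix.diagonal a * (Matrix.diagonal b * Vᴴ) := by rw [h]
    _ = V * (Matrix.diagonal a * Matrix.diagonal b) * Vᴴ := by
        rw [mul_assoc, mul_assoc, mul_assoc]
    _ = V * Matrix.diagonal (fun j => a j * b j) * Vᴴ := by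
        rw [Matrix.diagonal_mul_diagonal]

lemma trace_conj (V : Matrix n n ℂ) (hVV' : Vᴴ * V = 1) (a : n → ℂ) :
    (V * Matrix.diagonal a * Vᴴ).trace = ∑ j, a j := by
  rw [Matrix.trace_mul_cycle, hVV', one_mul, Matrix.trace_diagonal]

lemma diag_congr {f h : n → ℂ} (hfh : ∀ j, f j = h j) :
    Matrix.diagonal f = Matrix.diagonal h := by rw [funext hfh]

lemma exists_dual (A : Matrix n n ℂ) :
    ∃ C : Matrix n n ℂ, Contr C ∧ Contr Cᴴ ∧ (Matrix.trace (C * A)).re = traceNorm A := by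
  set hpsd := Matrix.posSemidef_conjTranspose_mul_self A with hhpsd
  set P := sqM A with hPdef
  have hP : P.PosSemidef := sqM_psd A
  have hPA : P * P = Aᴴ * A := sqM_mul_self A
  set V : Matrix n n ℂ := (Matrix.IsHermitian.eigenvectorUnitary hP.1 : Matrix n n ℂ) with hVdef
  set s : n → ℝ := hP.1.eigenvalues with hsdef
  have hVV : V * Vᴴ = 1 :=
    Matrix.mem_unitaryGroup_iff.mp (Matrix.IsHermitian.eigenvectorUnitary hP.1).2
  have hVV' : Vᴴ * V = 1 :=
    Matrix.mem_unitaryGroup_iff'.mp (Matrix.IsHermitian.eigenvectorUnitary hP.1).2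
  set d : n → ℂ := RCLike.ofReal ∘ s with hddef
  have hspec : P = V * Matrix.diagonal d * Vᴴ := hP.1.spectral_theorem
  set g : n → ℂ := fun j => if s j = 0 then 0 else ((s j : ℂ))⁻¹ with hgdef
  set N : Matrix n n ℂ := V * Matrix.diagonal g * Vᴴ with hNdef
  set C : Matrix n n ℂ := N * Aᴴ with hCdef
  have hsnn : ∀ j, 0 ≤ s j := fun j => hP.eigenvalues_nonneg j
  have hPP : P * P = V * Matrix.diagonal (fun j => d j * d j) * Vᴴ := by
    conv_lhs => rw [hspec]
    exact conj_mul V hVV' d d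
  have hCA : C * A = V * Matrix.diagonal (fun j => g j * (d j * d j)) * Vᴴ := by
    rw [hCdef, mul_assoc, ← hPA, hPP, hNdef]
    exact conj_mul V hVV' g _
  have htraceCA : (Matrix.trace (C * A)) = ∑ j, (s j : ℂ) := by
    rw [hCA, trace_conj V hVV']
    refine Finset.sum_congr rfl fun j _ => ?_
    by_cases h : s j = 0
    · simp [hgdef, hddef, h]
    · simp only [hgdef, hddef, Function.comp]
      rw [if_neg h]
      have : (s j : ℂ) ≠ 0 := Complex.ofReal_ne_zero.mpr h
      field_simp
      rfl
  have htr : traceNorm A = ∑ j, s j := by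
    have h1 : P.trace = ∑ j, (s j : ℂ) := by
      conv_lhs => rw [hspec]
      rw [trace_conj V hVV']
      rfl
    rw [traceNorm_eq, show sqM A = P from rfl, h1]
    simp [Complex.re_sum]
  have hgstar : star g = g := by
    funext j
    by_cases h2 : s j = 0 <;>
      simp [hgdef, h2, Pi.star_apply, ← Complex.ofReal_inv, Complex.conj_ofReal]
  have hNH : Nᴴ = N := by
    rw [hNdef]
    simp only [Matrix.conjTranspose_mul, Matrix.conjTranspose_conjTranspose,
      Matrix.diagonal_conjTranspose, hgstar, mul_assoc]
  have hCH : Cᴴ = A * N := by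
    rw [hCdef, Matrix.conjTranspose_mul, Matrix.conjTranspose_conjTranspose, hNH]
  set e : n → ℂ := fun j => if s j = 0 then 0 else 1 with hedef
  have hWW : (Cᴴ)ᴴ * Cᴴ = V * Matrix.diagonal e * Vᴴ := by
    rw [hCH, Matrix.conjTranspose_mul, hNH]
    have h1 : N * Aᴴ * (A * N) = N * (P * P) * N := by
      rw [hPA]; noncomm_ring
    rw [h1, hPP, hNdef, conj_mul V hVV', conj_mul V hVV']
    refine congrArg (· * Vᴴ) (congrArg (V * ·) (diag_congr fun j => ?_))
    by_cases h2 : s j = 0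
    · simp [hgdef, hddef, hedef, h2]
    · have hne : (s j : ℂ) ≠ 0 := Complex.ofReal_ne_zero.mpr h2
      simp only [hgdef, hddef, hedef, Function.comp_apply, if_neg h2]
      field_simp
      rfl
  have hVpres : ∀ x : n → ℂ, cnorm (Vᴴ *ᵥ x) = cnorm x := by
    intro x
    unfold cnorm
    rw [dot_mulVec_left, Matrix.conjTranspose_conjTranspose, Matrix.mulVec_mulVec, hVV,
      Matrix.one_mulVec]
  have hContrW : Contr Cᴴ := by
    intro x
    have h1 : cnorm (Cᴴ *ᵥ x) ^ 2 ≤ cnorm x ^ 2 := by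
      rw [cnorm_sq, dot_mulVec_left, Matrix.mulVec_mulVec, hWW]
      have expand : (V * Matrix.diagonal e * Vᴴ) *ᵥ x
          = V *ᵥ (Matrix.diagonal e *ᵥ (Vᴴ *ᵥ x)) := by
        simp [Matrix.mulVec_mulVec, mul_assoc]
      have step : star x ⬝ᵥ (V *ᵥ (Matrix.diagonal e *ᵥ (Vᴴ *ᵥ x)))
          = star (Vᴴ *ᵥ x) ⬝ᵥ (Matrix.diagonal e *ᵥ (Vᴴ *ᵥ x)) := by
        rw [eq_comm, dot_mulVec_left, Matrix.conjTranspose_conjTranspose]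
      rw [expand, step]
      set y := Vᴴ *ᵥ x with hy
      have hle : (star y ⬝ᵥ (Matrix.diagonal e *ᵥ y)).re ≤ (star y ⬝ᵥ y).re := by
        simp only [dotProduct, Matrix.mulVec_diagonal, Pi.star_apply, Complex.re_sum]
        apply Finset.sum_le_sum
        intro j _
        by_cases h2 : s j = 0
        · simp only [hedef, h2, if_pos, ite_true, zero_mul, mul_zero, Complex.zero_re]
          have := Complex.normSq_nonneg (y j)
          simp [Complex.normSq_apply] at this
          simp [Complex.mul_re, RCLike.star_def, Complex.conj_re, Complex.conj_im]
          nlinarith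
        · simp [hedef, h2]
      calc (star y ⬝ᵥ (Matrix.diagonal e *ᵥ y)).re ≤ (star y ⬝ᵥ y).re := hle
        _ = cnorm y ^ 2 := (cnorm_sq y).symm
        _ = cnorm x ^ 2 := by rw [hy, hVpres]
    nlinarith [cnorm_nonneg (Cᴴ *ᵥ x), cnorm_nonneg x]
  refine ⟨C, ?_, hContrW, ?_⟩
  · have := hContrW.conjTranspose
    rwa [Matrix.conjTranspose_conjTranspose] at this
  · rw [htraceCA, htr]
    simp [Complex.re_sum]


lemma re_trace_le (A : Matrix n n ℂ) : (Matrix.trace A).re ≤ traceNorm A := by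
  have h := re_trace_mul_le A 1 (by rw [Matrix.conjTranspose_one]; exact Contr.one)
  rwa [one_mul] at h

lemma traceNorm_add_le (A B : Matrix n n ℂ) :
    traceNorm (A + B) ≤ traceNorm A + traceNorm B := by
  obtain ⟨C, hC, hC', heq⟩ := exists_dual (A + B)
  rw [← heq, mul_add, Matrix.trace_add, Complex.add_re]
  exact add_le_add (re_trace_mul_le A C hC') (re_trace_mul_le B C hC')

lemma traceNorm_conjTranspose (A : Matrix n n ℂ) : traceNorm Aᴴ = traceNorm A := by
  have key : ∀ B : Matrix n n ℂ, traceNorm Bᴴ ≤ traceNorm B := by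
    intro B
    obtain ⟨C, hC, hC', heq⟩ := exists_dual Bᴴ
    rw [← heq]
    have h1 : (Matrix.trace (C * Bᴴ)).re = (Matrix.trace (Cᴴ * B)).re := by
      have h2 : Cᴴ * B = (Bᴴ * C)ᴴ := by
        rw [Matrix.conjTranspose_mul, Matrix.conjTranspose_conjTranspose]
      rw [h2, Matrix.trace_conjTranspose, Matrix.trace_mul_comm, Complex.star_def,
        Complex.conj_re]
    rw [h1]
    exact re_trace_mul_le B Cᴴ (by rwa [Matrix.conjTranspose_conjTranspose])
  refine le_antisymm (key A) ?_
  have h := key Aᴴ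
  rwa [Matrix.conjTranspose_conjTranspose] at h

lemma traceNorm_psd {M : Matrix n n ℂ} (hM : M.PosSemidef) :
    traceNorm M = M.trace.re := by
  have hsq : M ^ 2 = Mᴴ * M := by rw [pow_two, hM.1]
  have h := sqM_of_sq_eq hM M hsq
  rw [traceNorm_eq, ← h]

lemma traceNorm_neg_psd {M : Matrix n n ℂ} (hM : M.PosSemidef) :
    traceNorm (-M) = M.trace.re := by
  have hsq : M ^ 2 = (-M)ᴴ * (-M) := by
    rw [pow_two, Matrix.conjTranspose_neg, neg_mul_neg, hM.1]
  have h := sqM_of_sq_eq hM (-M) hsq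
  rw [traceNorm_eq, ← h]


/-- conjugate transpose as a continuous `ℝ`-linear map -/
noncomputable def ctCLM : Matrix n n ℂ →L[ℝ] Matrix n n ℂ :=
  LinearMap.toContinuousLinearMap
    { toFun := fun M => Mᴴ
      map_add' := fun M N => Matrix.conjTranspose_add M N
      map_smul' := fun r M => by
        show (r • M)ᴴ = r • Mᴴ
        rw [Matrix.conjTranspose_smul]
        simp }

@[simp] lemma ctCLM_apply (M : Matrix n n ℂ) : (ctCLM M) = Mᴴ := rfl

noncomputable def trCLM : Matrix n n ℂ →L[ℝ] ℂ :=
  LinearMap.toContinuousLinearMap (Matrix.traceLinearMap n ℝ ℂ)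

@[simp] lemma trCLM_apply (M : Matrix n n ℂ) : trCLM M = M.trace := rfl

noncomputable def evalCLM (x : n → ℂ) : Matrix n n ℂ →L[ℝ] ℂ :=
  LinearMap.toContinuousLinearMap
    { toFun := fun M => star x ⬝ᵥ (M *ᵥ x)
      map_add' := fun M N => by
        show star x ⬝ᵥ ((M + N) *ᵥ x) = star x ⬝ᵥ (M *ᵥ x) + star x ⬝ᵥ (N *ᵥ x)
        rw [Matrix.add_mulVec, dotProduct_add]
      map_smul' := fun r M => by
        show star x ⬝ᵥ ((r • M) *ᵥ x) = r • (star x ⬝ᵥ (M *ᵥ x))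
        rw [Matrix.smul_mulVec, dotProduct_smul]  }

@[simp] lemma evalCLM_apply (x : n → ℂ) (M : Matrix n n ℂ) :
    evalCLM x M = star x ⬝ᵥ (M *ᵥ x) := rfl

lemma integral_nonneg_complex {T : Type*} [MeasurableSpace T] (μ : Measure T)
    (f : T → ℂ) (hf : Integrable f μ) (h : ∀ τ, 0 ≤ f τ) : 0 ≤ ∫ τ, f τ ∂μ := by
  rw [Complex.le_def]
  constructor
  · have hre := integral_re hf
    simp only [RCLike.re_eq_complex_re] at hre
    rw [Complex.zero_re, ← hre]
    exact integral_nonneg fun τ => by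
      have := (Complex.le_def.mp (h τ)).1
      simpa using this
  · have him := integral_im hf
    simp only [RCLike.im_eq_complex_im] at him
    rw [Complex.zero_im, ← him]
    have : ∀ τ, (f τ).im = 0 := fun τ => by
      have := (Complex.le_def.mp (h τ)).2
      simpa using this.symm
    simp [this]

/-- integral of a family of PSD matrices is PSD -/
lemma integral_posSemidef {T : Type*} [MeasurableSpace T] (μ : Measure T)
    (f : T → Matrix n n ℂ) (hf : @Integrable _ _ (@SeminormedAddGroup.toContinuousENorm _ (Matrix.frobeniusNormedAddCommGroup).toSeminormedAddCommGroup.toSeminormedAddGroup) _ _ f μ) (h : ∀ τ, (f τ).PosSemidef) :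
    (∫ τ, f τ ∂μ).PosSemidef := by
  refine Matrix.PosSemidef.of_dotProduct_mulVec_nonneg ?_ ?_
  · have := ctCLM.integral_comp_comm hf
    have h2 : (fun τ => ctCLM (f τ)) = f := funext fun τ => by
      rw [ctCLM_apply, (h τ).1]
    change ∫ τ, (f τ)ᴴ ∂μ = (∫ τ, f τ ∂μ)ᴴ at this
    show (∫ τ, f τ ∂μ)ᴴ = _
    rw [← this]
    congr 1
  · intro x
    have hcomm := (evalCLM x).integral_comp_comm hf
    have h2 : star x ⬝ᵥ ((∫ τ, f τ ∂μ) *ᵥ x) = ∫ τ, star x ⬝ᵥ (f τ *ᵥ x) ∂μ := by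
      exact hcomm.symm
    rw [h2]
    exact integral_nonneg_complex μ _ ((evalCLM x).integrable_comp hf)
      fun τ => (h τ).dotProduct_mulVec_nonneg x

lemma integral_conjTranspose {T : Type*} [MeasurableSpace T] (μ : Measure T)
    (f : T → Matrix n n ℂ) (hf : @Integrable _ _ (@SeminormedAddGroup.toContinuousENorm _ (Matrix.frobeniusNormedAddCommGroup).toSeminormedAddCommGroup.toSeminormedAddGroup) _ _ f μ) :
    (∫ τ, f τ ∂μ)ᴴ = ∫ τ, (f τ)ᴴ ∂μ := by
  have := ctCLM.integral_comp_comm hf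
  change ∫ τ, (f τ)ᴴ ∂μ = (∫ τ, f τ ∂μ)ᴴ at this
  exact this.symm

lemma integral_trace {T : Type*} [MeasurableSpace T] (μ : Measure T)
    (f : T → Matrix n n ℂ) (hf : @Integrable _ _ (@SeminormedAddGroup.toContinuousENorm _ (Matrix.frobeniusNormedAddCommGroup).toSeminormedAddCommGroup.toSeminormedAddGroup) _ _ f μ) :
    (∫ τ, f τ ∂μ).trace = ∫ τ, (f τ).trace ∂μ := by
  have := trCLM.integral_comp_comm hf
  change ∫ τ, (f τ).trace ∂μ = (∫ τ, f τ ∂μ).trace at this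
  exact this.symm


end TNAux

open TNAux

/-- Gentle-measurement-type lemma: for families of positive semidefinite
operators ρ_τ and orthogonal projections P_τ on a finite-dimensional Hilbert
space, and any measure dτ,
‖∫ (ρ_τ − P_τ ρ_τ P_τ) dτ‖₁ ≤ 3 ‖∫ (id − P_τ) ρ_τ dτ‖₁. -/
theorem traceNorm_integral_sub_proj_conj_le {n : Type*} [Fintype n] [DecidableEq n]
    {T : Type*} [MeasurableSpace T] (μ : Measure T)
    (ρ P : T → Matrix n n ℂ)
    (hρ : ∀ τ, (ρ τ).PosSemidef)
    (hProj : ∀ τ, (P τ)ᴴ = P τ ∧ P τ * P τ = P τ)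
    (hInt : @Integrable _ _ (@SeminormedAddGroup.toContinuousENorm _ (Matrix.frobeniusNormedAddCommGroup).toSeminormedAddCommGroup.toSeminormedAddGroup) _ _ ρ μ)
    (hInt₁ : @Integrable _ _ (@SeminormedAddGroup.toContinuousENorm _ (Matrix.frobeniusNormedAddCommGroup).toSeminormedAddCommGroup.toSeminormedAddGroup) _ _ (fun τ => P τ * ρ τ) μ)
    (hInt₂ : @Integrable _ _ (@SeminormedAddGroup.toContinuousENorm _ (Matrix.frobeniusNormedAddCommGroup).toSeminormedAddCommGroup.toSeminormedAddGroup) _ _ (fun τ => P τ * ρ τ * P τ) μ) :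
    traceNorm (∫ τ, (ρ τ - P τ * ρ τ * P τ) ∂μ) ≤
      3 * traceNorm (∫ τ, ((1 : Matrix n n ℂ) - P τ) * ρ τ ∂μ) := by
  have hQH : ∀ τ, ((1 : Matrix n n ℂ) - P τ)ᴴ = 1 - P τ := fun τ => by
    rw [Matrix.conjTranspose_sub, Matrix.conjTranspose_one, (hProj τ).1]
  have hQ2 : ∀ τ, ((1 : Matrix n n ℂ) - P τ) * (1 - P τ) = 1 - P τ := fun τ => by
    rw [sub_mul, one_mul, mul_sub, mul_one, (hProj τ).2]
    simp
  -- integrability facts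
  have hIntρP : @Integrable _ _ (@SeminormedAddGroup.toContinuousENorm _ (Matrix.frobeniusNormedAddCommGroup).toSeminormedAddCommGroup.toSeminormedAddGroup) _ _ (fun τ => ρ τ * P τ) μ := by
    have heq : (fun τ => ρ τ * P τ) = fun τ => ctCLM (P τ * ρ τ) := funext fun τ => by
      rw [ctCLM_apply, Matrix.conjTranspose_mul, (hρ τ).1, (hProj τ).1]
    rw [heq]
    exact ctCLM.integrable_comp hInt₁
  have hIntQρ : @Integrable _ _ (@SeminormedAddGroup.toContinuousENorm _ (Matrix.frobeniusNormedAddCommGroup).toSeminormedAddCommGroup.toSeminormedAddGroup) _ _ (fun τ => ((1 : Matrix n n ℂ) - P τ) * ρ τ) μ := by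
    have heq : (fun τ => ((1 : Matrix n n ℂ) - P τ) * ρ τ)
        = fun τ => ρ τ - P τ * ρ τ := funext fun τ => by rw [sub_mul, one_mul]
    rw [heq]
    exact hInt.sub hInt₁
  have hIntρQ : @Integrable _ _ (@SeminormedAddGroup.toContinuousENorm _ (Matrix.frobeniusNormedAddCommGroup).toSeminormedAddCommGroup.toSeminormedAddGroup) _ _ (fun τ => ρ τ * ((1 : Matrix n n ℂ) - P τ)) μ := by
    have heq : (fun τ => ρ τ * ((1 : Matrix n n ℂ) - P τ))
        = fun τ => ρ τ - ρ τ * P τ := funext fun τ => by rw [mul_sub, mul_one]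
    rw [heq]
    exact hInt.sub hIntρP
  have hIntQρQ :
      @Integrable _ _ (@SeminormedAddGroup.toContinuousENorm _ (Matrix.frobeniusNormedAddCommGroup).toSeminormedAddCommGroup.toSeminormedAddGroup) _ _ (fun τ => ((1 : Matrix n n ℂ) - P τ) * ρ τ * ((1 : Matrix n n ℂ) - P τ)) μ := by
    have heq : (fun τ => ((1 : Matrix n n ℂ) - P τ) * ρ τ * ((1 : Matrix n n ℂ) - P τ))
        = fun τ => (ρ τ - P τ * ρ τ) - (ρ τ * P τ - P τ * ρ τ * P τ) := funext fun τ => by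
      noncomm_ring
    rw [heq]
    exact (hInt.sub hInt₁).sub (hIntρP.sub hInt₂)
  -- split the integral
  set A : Matrix n n ℂ := ∫ τ, ((1 : Matrix n n ℂ) - P τ) * ρ τ ∂μ with hAdef
  set M : Matrix n n ℂ := ∫ τ, ((1 : Matrix n n ℂ) - P τ) * ρ τ * ((1 : Matrix n n ℂ) - P τ) ∂μ
    with hMdef
  have hXsplit : (∫ τ, (ρ τ - P τ * ρ τ * P τ) ∂μ) = A + (Aᴴ + -M) := by
    have hAH : Aᴴ = ∫ τ, ρ τ * ((1 : Matrix n n ℂ) - P τ) ∂μ := by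
      rw [hAdef, integral_conjTranspose μ _ hIntQρ]
      congr 1
      funext τ
      rw [Matrix.conjTranspose_mul, (hρ τ).1, hQH τ]
    have heq : (fun τ => ρ τ - P τ * ρ τ * P τ)
        = fun τ => (((1 : Matrix n n ℂ) - P τ) * ρ τ + ρ τ * ((1 : Matrix n n ℂ) - P τ))
            - ((1 : Matrix n n ℂ) - P τ) * ρ τ * ((1 : Matrix n n ℂ) - P τ) := funext fun τ => by
      noncomm_ring
    have hsum : @Integrable _ _ (@SeminormedAddGroup.toContinuousENorm _ (Matrix.frobeniusNormedAddCommGroup).toSeminormedAddCommGroup.toSeminormedAddGroup) _ _ (fun τ => ((1 : Matrix n n ℂ) - P τ) * ρ τ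
        + ρ τ * ((1 : Matrix n n ℂ) - P τ)) μ := hIntQρ.add hIntρQ
    rw [heq, integral_sub hsum hIntQρQ, integral_add hIntQρ hIntρQ, hAH]
    rw [← hAdef, ← hMdef]
    abel
  have hMpsd : M.PosSemidef := by
    rw [hMdef]
    refine integral_posSemidef μ _ hIntQρQ fun τ => ?_
    have h := (hρ τ).mul_mul_conjTranspose_same ((1 : Matrix n n ℂ) - P τ)
    rwa [hQH τ] at h
  have hMtr : M.trace = A.trace := by
    rw [hMdef, hAdef, integral_trace μ _ hIntQρQ, integral_trace μ _ hIntQρ]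
    congr 1
    funext τ
    rw [Matrix.trace_mul_cycle, hQ2 τ]
  have h1 : traceNorm (∫ τ, (ρ τ - P τ * ρ τ * P τ) ∂μ)
      ≤ traceNorm A + (traceNorm Aᴴ + traceNorm (-M)) := by
    rw [hXsplit]
    exact le_trans (traceNorm_add_le _ _)
      (add_le_add (le_refl _) (traceNorm_add_le _ _))
  have h2 : traceNorm Aᴴ = traceNorm A := traceNorm_conjTranspose A
  have h3 : traceNorm (-M) = M.trace.re := traceNorm_neg_psd hMpsd
  have h4 : M.trace.re ≤ traceNorm A := by
    rw [hMtr]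
    exact re_trace_le A
  linarith
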